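/- Corollary 3 (cancellation of thermodynamic vorticity in complex fluids): For a steady non-isentropic flow of a complex fluid with order-parameter values in ℝᵏ satisfying both the steady momentum balance ρ (Dv)v = div T with T = −p̃ I − T̄^E and the steady substructural balance div S − z = v·grad(∂_ν̇χ) − ∂_νχ, if at every point of B and for every index i one has ϑ ∂_iη − ∂_i h_c = Σ_α ∂_i( ι ( Σ_j ∂_j S_α^j − v·grad((∂_ν̇χ)_α) + (∂_νχ)_α ) ) ν^α + Σ_{α,j} ∂_i((∂_Nφ)_α^j) ∂_jν^α + ι Σ_α ∂_iν^α ( Σ_j ∂_j((∂_Nφ)_α^j) ) + ι Σ_{α,j} (∂_Nφ)_α^j ∂_j∂_iν^α, then ω × v = 0 throughout B. -/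

import Mathlib

noncomputable section

/-- Points of ℝ³. -/
abbrev V3 : Type := Fin 3 → ℝ

/-- Partial derivative ∂ᵢ of a scalar field on ℝ³. -/
def pd (i : Fin 3) (f : V3 → ℝ) (x : V3) : ℝ :=
  fderiv ℝ f x (Pi.single i 1)

/-- Cross product on ℝ³. -/
def cross (a b : V3) : V3 :=
  ![a 1 * b 2 - a 2 * b 1,
    a 2 * b 0 - a 0 * b 2,
    a 0 * b 1 - a 1 * b 0]

/-- Curl of a vector field on ℝ³. -/
def curl (u : V3 → V3) (x : V3) : V3 :=
  ![pd 1 (fun y => u y 2) x - pd 2 (fun y => u y 1) x,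
    pd 2 (fun y => u y 0) x - pd 0 (fun y => u y 2) x,
    pd 0 (fun y => u y 1) x - pd 1 (fun y => u y 0) x]

/-- A steady complex fluid on an open set `B ⊆ ℝ³` with order-parameter values
in `ℝᵏ`: smooth fields `ρ > 0` (mass density), `η` (entropy), `v` (velocity),
`ν` (order parameter), a smooth potential `φ = φ(ι, n, N, η)` and a smooth
kinetic co-energy `χ = χ(n, ṅ)`. -/
structure ComplexFluid (k : ℕ) where
  B : Set V3
  hB : IsOpen B
  ρ : V3 → ℝ
  η : V3 → ℝ
  v : V3 → V3
  ν : V3 → Fin k → ℝ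
  φ : ℝ × (Fin k → ℝ) × (Fin k → Fin 3 → ℝ) × ℝ → ℝ
  χ : (Fin k → ℝ) × (Fin k → ℝ) → ℝ
  hρ : ContDiffOn ℝ (⊤ : ℕ∞) ρ B
  hη : ContDiffOn ℝ (⊤ : ℕ∞) η B
  hv : ContDiffOn ℝ (⊤ : ℕ∞) v B
  hν : ContDiffOn ℝ (⊤ : ℕ∞) ν B
  hφ : ContDiff ℝ (⊤ : ℕ∞) φ
  hχ : ContDiff ℝ (⊤ : ℕ∞) χ
  hρpos : ∀ x ∈ B, 0 < ρ x

namespace ComplexFluid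

variable {k : ℕ} (K : ComplexFluid k)

/-- Specific volume `ι = 1/ρ`. -/
def ι (x : V3) : ℝ := (K.ρ x)⁻¹

/-- Gradient of the order parameter, components `(Dν)_α^j = ∂_jν^α`. -/
def Dν (x : V3) (α : Fin k) (j : Fin 3) : ℝ := pd j (fun y => K.ν y α) x

/-- The point `(ι(x), ν(x), Dν(x), η(x))` at which `φ` and its partial
derivatives are evaluated. -/
def pt (x : V3) : ℝ × (Fin k → ℝ) × (Fin k → Fin 3 → ℝ) × ℝ :=
  (K.ι x, K.ν x, K.Dν x, K.η x)

/-- `∂_ιφ` evaluated along the fields. -/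
def dφι (x : V3) : ℝ := fderiv ℝ K.φ (K.pt x) (1, 0, 0, 0)

/-- `(∂_νφ)_α` evaluated along the fields. -/
def dφν (x : V3) (α : Fin k) : ℝ := fderiv ℝ K.φ (K.pt x) (0, Pi.single α 1, 0, 0)

/-- `(∂_Nφ)_α^j` evaluated along the fields. -/
def dφN (x : V3) (α : Fin k) (j : Fin 3) : ℝ :=
  fderiv ℝ K.φ (K.pt x) (0, 0, Pi.single α (Pi.single j 1), 0)

/-- Temperature `ϑ = ∂_ηφ` evaluated along the fields. -/
def temp (x : V3) : ℝ := fderiv ℝ K.φ (K.pt x) (0, 0, 0, 1)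

/-- Convective rate `ν̇ = (Dν)v`. -/
def νdot (x : V3) (α : Fin k) : ℝ := ∑ j, K.Dν x α j * K.v x j

/-- `(∂_νχ)_α` evaluated along the fields. -/
def dχν (x : V3) (α : Fin k) : ℝ :=
  fderiv ℝ K.χ (K.ν x, K.νdot x) (Pi.single α 1, 0)

/-- The field `(∂_ν̇χ)_α` evaluated along the fields. -/
def dχνdot (x : V3) (α : Fin k) : ℝ :=
  fderiv ℝ K.χ (K.ν x, K.νdot x) (0, Pi.single α 1)

/-- Pressure `p̃ = −∂_ιφ`. -/
def ptil (x : V3) : ℝ := -(K.dφι x)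

/-- Microstress `S = ρ ∂_Nφ`. -/
def S (x : V3) (α : Fin k) (j : Fin 3) : ℝ := K.ρ x * K.dφN x α j

/-- Self-interaction `z = ρ ∂_νφ`. -/
def z (x : V3) (α : Fin k) : ℝ := K.ρ x * K.dφν x α

/-- Ericksen stress `(T̄^E)_{ij} = Σ_α ∂_iν^α (∂_Nφ)_α^j`. -/
def TE (x : V3) (i j : Fin 3) : ℝ := ∑ α, K.Dν x α i * K.dφN x α j

/-- Specific enthalpy `ξ_c = φ − ι ∂_ιφ − ∂_νφ·ν − ∂_Nφ·Dν`. -/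
def ξc (x : V3) : ℝ :=
  K.φ (K.pt x) - K.ι x * K.dφι x - (∑ α, K.dφν x α * K.ν x α)
    - ∑ α, ∑ j, K.dφN x α j * K.Dν x α j

/-- Total enthalpy `h_c = (1/2)|v|² + ξ_c`. -/
def hc (x : V3) : ℝ := (1 / 2) * (∑ i, (K.v x i) ^ 2) + K.ξc x

/-- Steady momentum balance `ρ (Dv)v = div T` with `T = −p̃ I − T̄^E`
(stated componentwise). -/
def MomentumBalance : Prop :=
  ∀ x ∈ K.B, ∀ i : Fin 3,
    K.ρ x * ∑ j, pd j (fun y => K.v y i) x * K.v x j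
      = ∑ j, pd j (fun y => -(K.ptil y) * (if i = j then (1:ℝ) else 0) - K.TE y i j) x

/-- Steady substructural balance `div S − z = v·grad(∂_ν̇χ) − ∂_νχ`
(stated componentwise on the order-parameter index). -/
def SubstructuralBalance : Prop :=
  ∀ x ∈ K.B, ∀ α : Fin k,
    (∑ j, pd j (fun y => K.S y α j) x) - K.z x α
      = (∑ j, K.v x j * pd j (fun y => K.dχνdot y α) x) - K.dχν x α

end ComplexFluid

/-! ### Auxiliary lemmas -/

section Aux

open Filter

lemma pd_congr_nhds {f g : V3 → ℝ} {x : V3} (h : f =ᶠ[nhds x] g) (i : Fin 3) :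
    pd i f x = pd i g x := by unfold pd; rw [Filter.EventuallyEq.fderiv_eq h]

lemma pd_add {f g : V3 → ℝ} {x : V3} (hf : DifferentiableAt ℝ f x)
    (hg : DifferentiableAt ℝ g x) (i : Fin 3) :
    pd i (fun y => f y + g y) x = pd i f x + pd i g x := by
  unfold pd; rw [fderiv_fun_add hf hg]; simp

lemma pd_sub {f g : V3 → ℝ} {x : V3} (hf : DifferentiableAt ℝ f x)
    (hg : DifferentiableAt ℝ g x) (i : Fin 3) :
    pd i (fun y => f y - g y) x = pd i f x - pd i g x := by
  unfold pd; rw [fderiv_fun_sub hf hg]; simp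

lemma pd_mul {f g : V3 → ℝ} {x : V3} (hf : DifferentiableAt ℝ f x)
    (hg : DifferentiableAt ℝ g x) (i : Fin 3) :
    pd i (fun y => f y * g y) x = pd i f x * g x + f x * pd i g x := by
  unfold pd; rw [fderiv_fun_mul hf hg]; simp; ring

lemma pd_const_mul {f : V3 → ℝ} {x : V3} (hf : DifferentiableAt ℝ f x) (c : ℝ) (i : Fin 3) :
    pd i (fun y => c * f y) x = c * pd i f x := by
  unfold pd; rw [fderiv_const_mul hf]; simp

lemma pd_sum {A : Type*} {s : Finset A} {f : A → V3 → ℝ} {x : V3}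
    (h : ∀ a ∈ s, DifferentiableAt ℝ (f a) x) (i : Fin 3) :
    pd i (fun y => ∑ a ∈ s, f a y) x = ∑ a ∈ s, pd i (f a) x := by
  unfold pd; rw [fderiv_fun_sum h]; simp

lemma contDiffAt_pd {f : V3 → ℝ} {x : V3} (hf : ContDiffAt ℝ (⊤ : ℕ∞) f x) (j : Fin 3) :
    ContDiffAt ℝ (⊤ : ℕ∞) (pd j f) x :=
  (hf.fderiv_right (le_refl _)).clm_apply contDiffAt_const

lemma clm_decomp {k : ℕ} (L : (ℝ × (Fin k → ℝ) × (Fin k → Fin 3 → ℝ) × ℝ) →L[ℝ] ℝ)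
    (a : ℝ) (b : Fin k → ℝ) (c : Fin k → Fin 3 → ℝ) (d : ℝ) :
    L (a, b, c, d) = a * L (1, 0, 0, 0) + (∑ α, b α * L (0, Pi.single α 1, 0, 0))
      + (∑ α, ∑ j, c α j * L (0, 0, Pi.single α (Pi.single j 1), 0)) + d * L (0, 0, 0, 1) := by
  classical
  have hb : b = ∑ α, b α • (Pi.single α (1:ℝ) : Fin k → ℝ) := by
    funext β
    simp [Finset.sum_apply, Pi.single_apply]
  have hc : c = ∑ α, ∑ j, c α j • (Pi.single α (Pi.single j (1:ℝ)) : Fin k → Fin 3 → ℝ) := by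
    funext β γ
    simp [Finset.sum_apply, Pi.single_apply, ite_apply, Finset.sum_ite_eq, Finset.sum_ite_eq']
  have h : ((a, b, c, d) : ℝ × (Fin k → ℝ) × (Fin k → Fin 3 → ℝ) × ℝ)
      = a • ((1:ℝ), (0 : Fin k → ℝ), (0 : Fin k → Fin 3 → ℝ), (0:ℝ))
        + (∑ α, b α • ((0:ℝ), (Pi.single α (1:ℝ) : Fin k → ℝ), (0 : Fin k → Fin 3 → ℝ), (0:ℝ)))
        + (∑ α, ∑ j, c α j • ((0:ℝ), (0 : Fin k → ℝ),
            (Pi.single α (Pi.single j (1:ℝ)) : Fin k → Fin 3 → ℝ), (0:ℝ)))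
        + d • ((0:ℝ), (0 : Fin k → ℝ), (0 : Fin k → Fin 3 → ℝ), (1:ℝ)) := by
    refine Prod.ext ?_ (Prod.ext ?_ (Prod.ext ?_ ?_)) <;>
      simp [Prod.fst_sum, Prod.snd_sum, ← hb, ← hc]
  rw [h]
  simp only [map_add, map_sum, map_smul, smul_eq_mul]

namespace ComplexFluid

variable {k : ℕ} (K : ComplexFluid k) {x : V3} (hx : x ∈ K.B)
include hx

lemma cρ : ContDiffAt ℝ (⊤ : ℕ∞) K.ρ x := K.hρ.contDiffAt (K.hB.mem_nhds hx)
lemma cη : ContDiffAt ℝ (⊤ : ℕ∞) K.η x := K.hη.contDiffAt (K.hB.mem_nhds hx)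
lemma cvj (j : Fin 3) : ContDiffAt ℝ (⊤ : ℕ∞) (fun y => K.v y j) x :=
  contDiffAt_pi.1 (K.hv.contDiffAt (K.hB.mem_nhds hx)) j
lemma cνα (α : Fin k) : ContDiffAt ℝ (⊤ : ℕ∞) (fun y => K.ν y α) x :=
  contDiffAt_pi.1 (K.hν.contDiffAt (K.hB.mem_nhds hx)) α
lemma cι : ContDiffAt ℝ (⊤ : ℕ∞) K.ι x := (K.cρ hx).inv (K.hρpos x hx).ne'
lemma cDν (α : Fin k) (j : Fin 3) : ContDiffAt ℝ (⊤ : ℕ∞) (fun y => K.Dν y α j) x :=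
  contDiffAt_pd (K.cνα hx α) j

lemma cpt : ContDiffAt ℝ (⊤ : ℕ∞) K.pt x := by
  refine (K.cι hx).prodMk (ContDiffAt.prodMk ?_ (ContDiffAt.prodMk ?_ (K.cη hx)))
  · exact contDiffAt_pi.2 fun α => K.cνα hx α
  · exact contDiffAt_pi.2 fun α => contDiffAt_pi.2 fun j => K.cDν hx α j

lemma cdφ (e : ℝ × (Fin k → ℝ) × (Fin k → Fin 3 → ℝ) × ℝ) :
    ContDiffAt ℝ (⊤ : ℕ∞) (fun y => fderiv ℝ K.φ (K.pt y) e) x :=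
  (((K.hφ.fderiv_right (le_refl _)).contDiffAt).comp x (K.cpt hx)).clm_apply contDiffAt_const

lemma cdφι : ContDiffAt ℝ (⊤ : ℕ∞) (fun y => K.dφι y) x := K.cdφ hx _
lemma cdφν (α : Fin k) : ContDiffAt ℝ (⊤ : ℕ∞) (fun y => K.dφν y α) x := K.cdφ hx _
lemma cdφN (α : Fin k) (j : Fin 3) : ContDiffAt ℝ (⊤ : ℕ∞) (fun y => K.dφN y α j) x :=
  K.cdφ hx _

end ComplexFluid

end Aux

namespace ComplexFluid

variable {k : ℕ} (K : ComplexFluid k) {x : V3} (hx : x ∈ K.B)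
include hx

lemma pd_phi_pt (i : Fin 3) :
    pd i (fun y => K.φ (K.pt y)) x
      = pd i K.ι x * K.dφι x + (∑ α, pd i (fun y => K.ν y α) x * K.dφν x α)
        + (∑ α, ∑ j, pd i (fun y => K.Dν y α j) x * K.dφN x α j)
        + pd i K.η x * K.temp x := by
  have dι := ((K.cι hx).differentiableAt (by simp)).hasFDerivAt
  have dη := ((K.cη hx).differentiableAt (by simp)).hasFDerivAt
  have dν : HasFDerivAt (fun y => K.ν y)
      (ContinuousLinearMap.pi fun α => fderiv ℝ (fun y => K.ν y α) x) x :=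
    hasFDerivAt_pi.2 fun α => ((K.cνα hx α).differentiableAt (by simp)).hasFDerivAt
  have dDν : HasFDerivAt (fun y => K.Dν y)
      (ContinuousLinearMap.pi fun α => ContinuousLinearMap.pi fun j =>
        fderiv ℝ (fun y => K.Dν y α j) x) x :=
    hasFDerivAt_pi.2 fun α => hasFDerivAt_pi.2 fun j =>
      ((K.cDν hx α j).differentiableAt (by simp)).hasFDerivAt
  have dpt : HasFDerivAt K.pt
      ((fderiv ℝ K.ι x).prod ((ContinuousLinearMap.pi fun α => fderiv ℝ (fun y => K.ν y α) x).prod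
        ((ContinuousLinearMap.pi fun α => ContinuousLinearMap.pi fun j =>
          fderiv ℝ (fun y => K.Dν y α j) x).prod (fderiv ℝ K.η x)))) x :=
    dι.prodMk (dν.prodMk (dDν.prodMk dη))
  have dφ := (K.hφ.differentiable (by simp) (K.pt x)).hasFDerivAt
  have dcomp : HasFDerivAt (fun y => K.φ (K.pt y))
      ((fderiv ℝ K.φ (K.pt x)).comp _) x := dφ.comp x dpt
  show fderiv ℝ (fun y => K.φ (K.pt y)) x (Pi.single i 1) = _
  rw [dcomp.fderiv]
  simp only [ContinuousLinearMap.comp_apply, ContinuousLinearMap.prod_apply,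
    ContinuousLinearMap.pi_apply]
  rw [clm_decomp]
  rfl

end ComplexFluid

section Keys

lemma cda {f : V3 → ℝ} {x : V3} (h : ContDiffAt ℝ (⊤ : ℕ∞) f x) : DifferentiableAt ℝ f x :=
  h.differentiableAt (by simp)

namespace ComplexFluid

variable {k : ℕ} (K : ComplexFluid k) {x : V3} (hx : x ∈ K.B)
include hx

lemma pd_ξc (i : Fin 3) :
    pd i (fun y => K.ξc y) x
      = K.temp x * pd i K.η x - K.ι x * pd i (fun y => K.dφι y) x
        - (∑ α, pd i (fun y => K.dφν y α) x * K.ν x α)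
        - (∑ α, ∑ j, pd i (fun y => K.dφN y α j) x * K.Dν x α j) := by
  have d1 : DifferentiableAt ℝ (fun y => K.φ (K.pt y)) x :=
    cda ((K.hφ.contDiffAt).comp x (K.cpt hx))
  have d2 : DifferentiableAt ℝ (fun y => K.ι y * K.dφι y) x :=
    cda ((K.cι hx).mul (K.cdφι hx))
  have d3a : ∀ α : Fin k, DifferentiableAt ℝ (fun y => K.dφν y α * K.ν y α) x :=
    fun α => cda ((K.cdφν hx α).mul (K.cνα hx α))
  have d3 : DifferentiableAt ℝ (fun y => ∑ α, K.dφν y α * K.ν y α) x :=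
    DifferentiableAt.fun_sum fun α _ => d3a α
  have d4a : ∀ α : Fin k, DifferentiableAt ℝ (fun y => ∑ j, K.dφN y α j * K.Dν y α j) x :=
    fun α => DifferentiableAt.fun_sum fun j _ =>
      cda ((K.cdφN hx α j).mul (K.cDν hx α j))
  have d4 : DifferentiableAt ℝ (fun y => ∑ α, ∑ j, K.dφN y α j * K.Dν y α j) x :=
    DifferentiableAt.fun_sum fun α _ => d4a α
  have h3 : pd i (fun y => ∑ α, K.dφν y α * K.ν y α) x
      = ∑ α, (pd i (fun y => K.dφν y α) x * K.ν x α
          + K.dφν x α * pd i (fun y => K.ν y α) x) := by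
    rw [pd_sum (fun α _ => d3a α)]
    exact Finset.sum_congr rfl fun α _ => pd_mul (cda (K.cdφν hx α)) (cda (K.cνα hx α)) i
  have h4 : pd i (fun y => ∑ α, ∑ j, K.dφN y α j * K.Dν y α j) x
      = ∑ α, ∑ j, (pd i (fun y => K.dφN y α j) x * K.Dν x α j
          + K.dφN x α j * pd i (fun y => K.Dν y α j) x) := by
    rw [pd_sum (fun α _ => d4a α)]
    refine Finset.sum_congr rfl fun α _ => ?_
    rw [pd_sum (fun j _ => cda ((K.cdφN hx α j).mul (K.cDν hx α j)))]
    exact Finset.sum_congr rfl fun j _ => pd_mul (cda (K.cdφN hx α j)) (cda (K.cDν hx α j)) i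
  have hexp : pd i (fun y => K.ξc y) x
      = pd i (fun y => K.φ (K.pt y)) x
        - (pd i K.ι x * K.dφι x + K.ι x * pd i (fun y => K.dφι y) x)
        - (∑ α, (pd i (fun y => K.dφν y α) x * K.ν x α
            + K.dφν x α * pd i (fun y => K.ν y α) x))
        - (∑ α, ∑ j, (pd i (fun y => K.dφN y α j) x * K.Dν x α j
            + K.dφN x α j * pd i (fun y => K.Dν y α j) x)) := by
    calc pd i (fun y => K.ξc y) x
        = pd i (fun y => (K.φ (K.pt y) - K.ι y * K.dφι y - ∑ α, K.dφν y α * K.ν y α)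
            - ∑ α, ∑ j, K.dφN y α j * K.Dν y α j) x := rfl
      _ = pd i (fun y => K.φ (K.pt y) - K.ι y * K.dφι y - ∑ α, K.dφν y α * K.ν y α) x
            - pd i (fun y => ∑ α, ∑ j, K.dφN y α j * K.Dν y α j) x :=
          pd_sub ((d1.sub d2).sub d3) d4 i
      _ = pd i (fun y => K.φ (K.pt y) - K.ι y * K.dφι y) x
            - pd i (fun y => ∑ α, K.dφν y α * K.ν y α) x
            - pd i (fun y => ∑ α, ∑ j, K.dφN y α j * K.Dν y α j) x := by
          rw [pd_sub (d1.fun_sub d2) d3]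
      _ = pd i (fun y => K.φ (K.pt y)) x - pd i (fun y => K.ι y * K.dφι y) x
            - pd i (fun y => ∑ α, K.dφν y α * K.ν y α) x
            - pd i (fun y => ∑ α, ∑ j, K.dφN y α j * K.Dν y α j) x := by
          rw [pd_sub d1 d2]
      _ = _ := by
          rw [pd_mul (cda (K.cι hx)) (cda (K.cdφι hx)), h3, h4]
  rw [hexp, K.pd_phi_pt hx i]
  have hcomm1 : ∑ α, (pd i (fun y => K.dφν y α) x * K.ν x α
        + K.dφν x α * pd i (fun y => K.ν y α) x)
      = (∑ α, pd i (fun y => K.dφν y α) x * K.ν x α)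
        + ∑ α, pd i (fun y => K.ν y α) x * K.dφν x α := by
    rw [← Finset.sum_add_distrib]
    exact Finset.sum_congr rfl fun α _ => by ring
  have hcomm2 : ∑ α, ∑ j, (pd i (fun y => K.dφN y α j) x * K.Dν x α j
        + K.dφN x α j * pd i (fun y => K.Dν y α j) x)
      = (∑ α, ∑ j, pd i (fun y => K.dφN y α j) x * K.Dν x α j)
        + ∑ α, ∑ j, pd i (fun y => K.Dν y α j) x * K.dφN x α j := by
    rw [← Finset.sum_add_distrib]
    refine Finset.sum_congr rfl fun α _ => ?_
    rw [← Finset.sum_add_distrib]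
    exact Finset.sum_congr rfl fun j _ => by ring
  rw [hcomm1, hcomm2]
  ring

lemma pd_hc (i : Fin 3) :
    pd i K.hc x
      = (∑ j, K.v x j * pd i (fun y => K.v y j) x) + pd i (fun y => K.ξc y) x := by
  have hfun : K.hc = fun y => (1/2 : ℝ) * (∑ j, K.v y j * K.v y j) + K.ξc y := by
    funext y
    simp [ComplexFluid.hc, sq]
  have dva : ∀ j : Fin 3, DifferentiableAt ℝ (fun y => K.v y j * K.v y j) x :=
    fun j => cda ((K.cvj hx j).mul (K.cvj hx j))
  have dsum : DifferentiableAt ℝ (fun y => ∑ j, K.v y j * K.v y j) x :=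
    DifferentiableAt.fun_sum fun j _ => dva j
  have dξ : DifferentiableAt ℝ (fun y => K.ξc y) x := by
    have d1 : DifferentiableAt ℝ (fun y => K.φ (K.pt y)) x :=
      cda ((K.hφ.contDiffAt).comp x (K.cpt hx))
    have d2 : DifferentiableAt ℝ (fun y => K.ι y * K.dφι y) x :=
      cda ((K.cι hx).mul (K.cdφι hx))
    have d3 : DifferentiableAt ℝ (fun y => ∑ α, K.dφν y α * K.ν y α) x :=
      DifferentiableAt.fun_sum fun α _ => cda ((K.cdφν hx α).mul (K.cνα hx α))
    have d4 : DifferentiableAt ℝ (fun y => ∑ α, ∑ j, K.dφN y α j * K.Dν y α j) x :=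
      DifferentiableAt.fun_sum fun α _ => DifferentiableAt.fun_sum fun j _ =>
        cda ((K.cdφN hx α j).mul (K.cDν hx α j))
    exact ((d1.sub d2).sub d3).sub d4
  rw [hfun]
  rw [pd_add ((differentiableAt_const _).fun_mul dsum) dξ,
    pd_const_mul dsum, pd_sum (fun j _ => dva j)]
  have : ∑ j : Fin 3, pd i (fun y => K.v y j * K.v y j) x
      = ∑ j : Fin 3, 2 * (K.v x j * pd i (fun y => K.v y j) x) := by
    refine Finset.sum_congr rfl fun j _ => ?_
    rw [pd_mul (cda (K.cvj hx j)) (cda (K.cvj hx j))]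
    ring
  rw [this, Finset.mul_sum]
  congr 1
  exact Finset.sum_congr rfl fun j _ => by ring

lemma mom_rhs (i : Fin 3) :
    ∑ j, pd j (fun y => -K.ptil y * (if i = j then (1:ℝ) else 0) - K.TE y i j) x
      = pd i (fun y => K.dφι y) x
        - ((∑ α, K.Dν x α i * (∑ j, pd j (fun y => K.dφN y α j) x))
          + (∑ α, ∑ j, K.dφN x α j * pd j (fun y => K.Dν y α i) x)) := by
  have dP : ∀ j : Fin 3, DifferentiableAt ℝ
      (fun y => -K.ptil y * (if i = j then (1:ℝ) else 0)) x := by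
    intro j
    have h : (fun y => -K.ptil y * (if i = j then (1:ℝ) else 0))
        = fun y => K.dφι y * (if i = j then (1:ℝ) else 0) := by
      funext y; simp [ComplexFluid.ptil]
    rw [h]
    exact (cda (K.cdφι hx)).mul_const _
  have dT : ∀ j : Fin 3, DifferentiableAt ℝ (fun y => K.TE y i j) x := fun j =>
    DifferentiableAt.fun_sum fun α _ => cda ((K.cDν hx α i).mul (K.cdφN hx α j))
  have hA : ∀ j : Fin 3, pd j (fun y => -K.ptil y * (if i = j then (1:ℝ) else 0)) x
      = (if i = j then (1:ℝ) else 0) * pd j (fun y => K.dφι y) x := by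
    intro j
    have h : (fun y => -K.ptil y * (if i = j then (1:ℝ) else 0))
        = fun y => (if i = j then (1:ℝ) else 0) * K.dφι y := by
      funext y; simp [ComplexFluid.ptil]
    rw [h, pd_const_mul (cda (K.cdφι hx))]
  have hB : ∀ j : Fin 3, pd j (fun y => K.TE y i j) x
      = ∑ α, (pd j (fun y => K.Dν y α i) x * K.dφN x α j
          + K.Dν x α i * pd j (fun y => K.dφN y α j) x) := by
    intro j
    have h : (fun y => K.TE y i j) = fun y => ∑ α, K.Dν y α i * K.dφN y α j := rfl
    rw [h, pd_sum (fun α _ => cda ((K.cDν hx α i).mul (K.cdφN hx α j)))]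
    exact Finset.sum_congr rfl fun α _ =>
      pd_mul (cda (K.cDν hx α i)) (cda (K.cdφN hx α j)) j
  calc ∑ j, pd j (fun y => -K.ptil y * (if i = j then (1:ℝ) else 0) - K.TE y i j) x
      = ∑ j : Fin 3, ((if i = j then (1:ℝ) else 0) * pd j (fun y => K.dφι y) x
          - ∑ α, (pd j (fun y => K.Dν y α i) x * K.dφN x α j
              + K.Dν x α i * pd j (fun y => K.dφN y α j) x)) := by
        refine Finset.sum_congr rfl fun j _ => ?_
        rw [pd_sub (dP j) (dT j), hA j, hB j]
    _ = (∑ j : Fin 3, (if i = j then (1:ℝ) else 0) * pd j (fun y => K.dφι y) x)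
          - ∑ j : Fin 3, ∑ α, (pd j (fun y => K.Dν y α i) x * K.dφN x α j
              + K.Dν x α i * pd j (fun y => K.dφN y α j) x) := by
        rw [Finset.sum_sub_distrib]
    _ = pd i (fun y => K.dφι y) x
          - ∑ α, ∑ j : Fin 3, (pd j (fun y => K.Dν y α i) x * K.dφN x α j
              + K.Dν x α i * pd j (fun y => K.dφN y α j) x) := by
        rw [Finset.sum_comm]
        congr 1
        simp [ite_mul, Finset.sum_ite_eq]
    _ = _ := by
        congr 1
        rw [← Finset.sum_add_distrib]
        refine Finset.sum_congr rfl fun α _ => ?_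
        rw [Finset.sum_add_distrib, Finset.mul_sum, add_comm]
        congr 1
        all_goals exact Finset.sum_congr rfl fun j _ => by ring

end ComplexFluid

end Keys

section Final

namespace ComplexFluid

variable {k : ℕ} (K : ComplexFluid k) {x : V3} (hx : x ∈ K.B)
include hx

lemma pd_big (hsub : K.SubstructuralBalance) (α : Fin k) (i : Fin 3) :
    pd i (fun y => K.ι y * ((∑ j, pd j (fun w => K.S w α j) y)
        - (∑ j, K.v y j * pd j (fun w => K.dχνdot w α) y) + K.dχν y α)) x
      = pd i (fun y => K.dφν y α) x := by
  refine pd_congr_nhds ?_ i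
  filter_upwards [K.hB.mem_nhds hx] with y hy
  have h := hsub y hy α
  have h2 : (∑ j, pd j (fun w => K.S w α j) y)
      - (∑ j, K.v y j * pd j (fun w => K.dχνdot w α) y) + K.dχν y α = K.z y α := by
    linarith
  rw [h2]
  show K.ι y * (K.ρ y * K.dφν y α) = K.dφν y α
  rw [← mul_assoc, ComplexFluid.ι, inv_mul_cancel₀ (K.hρpos y hy).ne', one_mul]

end ComplexFluid

end Final
/-- Corollary 3, cancellation of thermodynamic vorticity in
complex fluids: under the steady momentum and substructural balances, if at
every point of `B` and for every index `i` one has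
`ϑ ∂_iη − ∂_i h_c = Σ_α ∂_i( ι ( Σ_j ∂_j S_α^j − v·grad((∂_ν̇χ)_α) + (∂_νχ)_α ) ) ν^α`
`  + Σ_{α,j} ∂_i((∂_Nφ)_α^j) ∂_jν^α + ι Σ_α ∂_iν^α ( Σ_j ∂_j((∂_Nφ)_α^j) )`
`  + ι Σ_{α,j} (∂_Nφ)_α^j ∂_j∂_iν^α`, then `ω × v = 0` throughout `B`. -/
theorem complexFluid_cancellation_of_vorticity
    {k : ℕ} (K : ComplexFluid k)
    (hbal : K.MomentumBalance) (hsub : K.SubstructuralBalance)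
    (hcancel : ∀ x ∈ K.B, ∀ i : Fin 3,
      K.temp x * pd i K.η x - pd i K.hc x
        = (∑ α, pd i (fun y => K.ι y *
              ((∑ j, pd j (fun w => K.S w α j) y)
                - (∑ j, K.v y j * pd j (fun w => K.dχνdot w α) y)
                + K.dχν y α)) x * K.ν x α)
          + (∑ α, ∑ j, pd i (fun y => K.dφN y α j) x * K.Dν x α j)
          + K.ι x * (∑ α, K.Dν x α i * (∑ j, pd j (fun y => K.dφN y α j) x))
          + K.ι x * ∑ α, ∑ j, K.dφN x α j * pd j (fun y => K.Dν y α i) x) :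
    ∀ x ∈ K.B, ∀ i : Fin 3, cross (curl K.v x) (K.v x) i = 0 := by
  intro x hx i
  have hρx := K.hρpos x hx
  have e1 : cross (curl K.v x) (K.v x) i
      = (∑ j, pd j (fun y => K.v y i) x * K.v x j)
        - (∑ j, K.v x j * pd i (fun y => K.v y j) x) := by
    fin_cases i <;> (simp [cross, curl, Fin.sum_univ_three]; ring)
  have e2 : (∑ j, pd j (fun y => K.v y i) x * K.v x j)
      = K.ι x * ∑ j, pd j (fun y => -K.ptil y * (if i = j then (1:ℝ) else 0)
          - K.TE y i j) x := by
    rw [← hbal x hx i, ComplexFluid.ι, inv_mul_cancel_left₀ hρx.ne']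
  have e3 := K.mom_rhs hx i
  have e4 := K.pd_hc hx i
  have e5 := K.pd_ξc hx i
  have e6 := hcancel x hx i
  have eA : (∑ α, pd i (fun y => K.ι y *
        ((∑ j, pd j (fun w => K.S w α j) y)
          - (∑ j, K.v y j * pd j (fun w => K.dχνdot w α) y)
          + K.dχν y α)) x * K.ν x α)
      = ∑ α, pd i (fun y => K.dφν y α) x * K.ν x α :=
    Finset.sum_congr rfl fun α _ => by rw [K.pd_big hx hsub α i]
  rw [e1, e2, e3]
  linear_combination e4 + e5 + e6 + eA
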